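/- Let X be a real-valued random variable with finite variance, and let φ : ℝ → ℝ be convex, nondecreasing and 1-Lipschitz. Then E[φ(X)] − φ(E[X]) ≤ √(Var(X)/2). -/

import Mathlib

open MeasureTheory ProbabilityTheory

noncomputable section

/-- For a real random variable `X` with finite variance and a convex, nondecreasing,
1-Lipschitz function `φ`, one has `E[φ(X)] − φ(E[X]) ≤ √(Var(X)/2)`. -/
theorem jensen_gap_le_sqrt_half_variance
    {Ω : Type*} [MeasurableSpace Ω] (μ : Measure Ω) [IsProbabilityMeasure μ]
    (X : Ω → ℝ) (hX : MemLp X 2 μ)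
    (φ : ℝ → ℝ) (hconv : ConvexOn ℝ Set.univ φ) (hmono : Monotone φ)
    (hlip : LipschitzWith 1 φ) :
    (∫ ω, φ (X ω) ∂μ) - φ (∫ ω, X ω ∂μ) ≤ Real.sqrt (variance X μ / 2) := by
  set m := ∫ ω, X ω ∂μ with hm
  have hX1 : Integrable X μ := hX.integrable one_le_two
  have hY : MemLp (fun ω => X ω - m) 2 μ := hX.sub (memLp_const m)
  have hY1 : Integrable (fun ω => X ω - m) μ := hY.integrable one_le_two
  have hYabs : Integrable (fun ω => |X ω - m|) μ := hY1.abs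
  have hYint : ∫ ω, (X ω - m) ∂μ = 0 := by
    rw [integral_sub hX1 (integrable_const m), integral_const]
    simp [hm]
  -- integrability of φ ∘ X
  have hφX : Integrable (fun ω => φ (X ω)) μ := by
    refine Integrable.mono' (hX1.abs.add (integrable_const |φ 0|))
      (hlip.continuous.comp_aestronglyMeasurable hX.aestronglyMeasurable) ?_
    filter_upwards with ω
    have h := hlip.dist_le_mul (X ω) 0
    simp only [Real.dist_eq, NNReal.coe_one, one_mul, sub_zero] at h
    calc ‖φ (X ω)‖ = |φ (X ω)| := rfl
      _ ≤ |φ (X ω) - φ 0| + |φ 0| := by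
          simpa using abs_add_le (φ (X ω) - φ 0) (φ 0)
      _ ≤ |X ω| + |φ 0| := by linarith
  -- pointwise bound
  have hpt : ∀ ω, φ (X ω) - φ m ≤ (|X ω - m| + (X ω - m)) / 2 := by
    intro ω
    rcases le_or_gt m (X ω) with h | h
    · have habs : |X ω - m| = X ω - m := abs_of_nonneg (by linarith)
      have := hlip.dist_le_mul (X ω) m
      simp only [Real.dist_eq, NNReal.coe_one, one_mul] at this
      rw [habs]
      linarith [le_trans (le_abs_self (φ (X ω) - φ m)) this]
    · have habs : |X ω - m| = -(X ω - m) := abs_of_neg (by linarith)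
      have := hmono h.le
      rw [habs]; linarith
  -- integral bound
  have hgap : (∫ ω, φ (X ω) ∂μ) - φ m ≤ (∫ ω, |X ω - m| ∂μ) / 2 := by
    have h1 : (∫ ω, φ (X ω) ∂μ) - φ m = ∫ ω, (φ (X ω) - φ m) ∂μ := by
      rw [integral_sub hφX (integrable_const _), integral_const]; simp
    have h2 : ∫ ω, (φ (X ω) - φ m) ∂μ ≤ ∫ ω, (|X ω - m| + (X ω - m)) / 2 ∂μ := by
      refine integral_mono (hφX.sub (integrable_const _)) ?_ hpt
      exact (hYabs.add hY1).div_const 2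
    have h3 : ∫ ω, (|X ω - m| + (X ω - m)) / 2 ∂μ = (∫ ω, |X ω - m| ∂μ) / 2 := by
      rw [integral_div, integral_add hYabs hY1, hYint, add_zero]
    rw [h1]; rw [h3] at h2; exact h2
  -- E|Y| ≤ √Var
  have hI : 0 ≤ ∫ ω, |X ω - m| ∂μ := integral_nonneg fun ω => abs_nonneg _
  have hvar : variance X μ = ∫ ω, (X ω - m) ^ 2 ∂μ := by
    simpa [hm] using variance_eq_integral hX.aestronglyMeasurable.aemeasurable
  have hsq : (∫ ω, |X ω - m| ∂μ) ^ 2 ≤ variance X μ := by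
    have habs2 : MemLp (fun ω => |X ω - m|) 2 μ := hY.abs
    have h0 := variance_nonneg (fun ω => |X ω - m|) μ
    rw [variance_eq_sub habs2] at h0
    have he : ∫ ω, |X ω - m| ^ 2 ∂μ = ∫ ω, (X ω - m) ^ 2 ∂μ := by
      simp [sq_abs]
    simp only [Pi.pow_apply] at h0
    rw [hvar]
    rw [he] at h0
    linarith
  have hEabs : ∫ ω, |X ω - m| ∂μ ≤ Real.sqrt (variance X μ) :=
    (Real.le_sqrt hI (variance_nonneg X μ)).mpr hsq
  -- final
  have hfin : Real.sqrt (variance X μ) / 2 ≤ Real.sqrt (variance X μ / 2) := by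
    rw [Real.le_sqrt (by positivity) (by linarith [variance_nonneg X μ])]
    rw [div_pow, Real.sq_sqrt (variance_nonneg X μ)]
    nlinarith [variance_nonneg X μ]
  calc (∫ ω, φ (X ω) ∂μ) - φ m ≤ (∫ ω, |X ω - m| ∂μ) / 2 := hgap
    _ ≤ Real.sqrt (variance X μ) / 2 := by linarith
    _ ≤ Real.sqrt (variance X μ / 2) := hfin

end
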